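/- Let S be a generalized numerical semigroup in ℕ^d. Then the Frobenius allowable gaps of S are precisely the maximal elements of the gap set H(S) = ℕ^d \ S under the natural (componentwise) partial order on ℕ^d; that is, a gap F ∈ H(S) is Frobenius allowable if and only if there is no gap x ∈ H(S) with x ≠ F and F ≤ x componentwise. -/

import Mathlib

open Finset

/-- A generalized numerical semigroup (GNS) in `ℕ^d`: contains `0`, is closed under
componentwise addition, and has finite complement. -/
def IsGNS {d : ℕ} (S : Set (Fin d → ℕ)) : Prop :=
  (0 : Fin d → ℕ) ∈ S ∧ (∀ a ∈ S, ∀ b ∈ S, a + b ∈ S) ∧ Sᶜ.Finite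

/-- A relaxed monomial order on `ℕ^d`: a (strict) total order `r` such that
`r v w → r v (w + u)` and `0` is below every nonzero element. -/
def IsRMO {d : ℕ} (r : (Fin d → ℕ) → (Fin d → ℕ) → Prop) : Prop :=
  IsStrictTotalOrder (Fin d → ℕ) r ∧
  (∀ v w u : Fin d → ℕ, r v w → r v (w + u)) ∧
  (∀ v : Fin d → ℕ, v ≠ 0 → r 0 v)

/-- `F` is the Frobenius gap of `S` with respect to the order `r`, i.e. the
`r`-maximum of the gap set `ℕ^d \ S`. -/
def IsFrobGapWrt {d : ℕ} (S : Set (Fin d → ℕ))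
    (r : (Fin d → ℕ) → (Fin d → ℕ) → Prop) (F : Fin d → ℕ) : Prop :=
  F ∉ S ∧ ∀ x, x ∉ S → x ≠ F → r x F

/-- `F` is a Frobenius allowable gap of `S`: it is the Frobenius gap with respect to
some relaxed monomial order. -/
def FrobAllowable {d : ℕ} (S : Set (Fin d → ℕ)) (F : Fin d → ℕ) : Prop :=
  ∃ r, IsRMO r ∧ IsFrobGapWrt S r F

/-- `F` is a maximal gap of `S` with respect to the natural (componentwise)
partial order on `ℕ^d`. -/
def MaxGap {d : ℕ} (S : Set (Fin d → ℕ)) (F : Fin d → ℕ) : Prop :=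
  F ∉ S ∧ ∀ x, x ∉ S → F ≤ x → x = F

/-- The set of Frobenius allowable gaps of `S`, i.e. the maximal elements of the gap
set under the natural partial order. -/
def FA {d : ℕ} (S : Set (Fin d → ℕ)) : Set (Fin d → ℕ) := {F | MaxGap S F}

/-- The set of pseudo-Frobenius gaps of `S`. -/
def PF {d : ℕ} (S : Set (Fin d → ℕ)) : Set (Fin d → ℕ) :=
  {P | P ∉ S ∧ ∀ s ∈ S, s ≠ 0 → P + s ∈ S}

/-- `S` is quasi-irreducible: for every gap `x`, either `2x` is Frobenius allowable or
`F - x ∈ S` for some Frobenius allowable gap `F`. -/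
def QuasiIrreducible {d : ℕ} (S : Set (Fin d → ℕ)) : Prop :=
  ∀ x, x ∉ S → (x + x ∈ FA S ∨ ∃ F ∈ FA S, ∃ s ∈ S, x + s = F)

/-- `S` is a Frobenius GNS with Frobenius gap `F`: the gap set has `F` as its unique
maximal element under the natural partial order. -/
def IsFrobeniusGNS {d : ℕ} (S : Set (Fin d → ℕ)) (F : Fin d → ℕ) : Prop :=
  IsGNS S ∧ MaxGap S F ∧ ∀ x, MaxGap S x → x = F

/-- `‖F‖ = ∏ i (F^(i) + 1)`, the number of lattice points in the box `[0, F]`. -/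
def normF {d : ℕ} (F : Fin d → ℕ) : ℕ := ∏ i, (F i + 1)

/-- `N(F)`: the number of Frobenius GNS in `ℕ^d` with Frobenius gap `F`. -/
noncomputable def NF {d : ℕ} (F : Fin d → ℕ) : ℕ :=
  {S : Set (Fin d → ℕ) | IsFrobeniusGNS S F}.ncard

/-- The Frobenius allowable gaps of a GNS are precisely the maximal elements of the
gap set under the natural partial order. -/
theorem frobenius_allowable_iff_maximal {d : ℕ} (S : Set (Fin d → ℕ)) (hS : IsGNS S)
    (F : Fin d → ℕ) (hF : F ∉ S) :
    FrobAllowable S F ↔ ¬∃ x, x ∉ S ∧ x ≠ F ∧ F ≤ x := by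
  classical
  constructor
  · rintro ⟨r, ⟨hsto, hmono, _⟩, _, hmax⟩ ⟨x, hxS, hxF, hFx⟩
    have hx : x = F + (x - F) := by
      funext i
      have h3 : F i ≤ x i := hFx i
      simp only [Pi.add_apply, Pi.sub_apply]
      omega
    have h1 : r x F := hmax x hxS hxF
    have h2 : r x (F + (x - F)) := hmono x F _ h1
    rw [← hx] at h2
    exact hsto.toIsStrictOrder.toIrrefl.irrefl x h2
  · intro hno
    let s : (Fin d → ℕ) → ℕ := fun v => ∑ i, v i
    let k : (Fin d → ℕ) → ℕ := fun v => ∑ i, min (v i) (F i)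
    let e : (Fin d → ℕ) → ℕ := fun v => Encodable.encode v
    let f : (Fin d → ℕ) → ℕ ×ₗ (ℕ ×ₗ ℕ) :=
      fun v => toLex (k v, toLex (s v, e v))
    have hfinj : Function.Injective f := by
      intro v w h
      simp only [f, toLex_inj, Prod.mk.injEq] at h
      exact Encodable.encode_injective h.2.2
    have hlt : ∀ v w, f v < f w ↔
        (k v < k w ∨ (k v = k w ∧ (s v < s w ∨ (s v = s w ∧ e v < e w)))) := by
      intro v w
      simp [f, Prod.Lex.lt_iff]
    have hkmono : ∀ v w : Fin d → ℕ, v ≤ w → k v ≤ k w := by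
      intro v w hvw
      refine Finset.sum_le_sum fun i _ => ?_
      have h3 : v i ≤ w i := hvw i
      exact min_le_min h3 le_rfl
    have hsadd : ∀ w u : Fin d → ℕ, u ≠ 0 → s w < s (w + u) := by
      intro w u hu
      have hsum : s (w + u) = s w + s u := by
        simp only [s, Pi.add_apply]
        rw [Finset.sum_add_distrib]
      have hpos : 0 < s u := by
        obtain ⟨i, hi⟩ := Function.ne_iff.mp hu
        exact Finset.sum_pos' (fun j _ => Nat.zero_le _)
          ⟨i, Finset.mem_univ i, Nat.pos_of_ne_zero hi⟩
      omega
    refine ⟨fun v w => f v < f w, ⟨?_, ?_, ?_⟩, hF, ?_⟩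
    · -- IsStrictTotalOrder
      refine { trichotomous := ?_, irrefl := ?_, trans := ?_ }
      · intro v w hvw hwv
        rcases lt_trichotomy (f v) (f w) with h | h | h
        exacts [absurd h hvw, hfinj h, absurd h hwv]
      · exact fun v => lt_irrefl (f v)
      · exact fun a b c hab hbc => lt_trans hab hbc
    · -- monotone under adding u
      intro v w u hvw
      by_cases hu : u = 0
      · simpa [hu] using hvw
      have hkle : k w ≤ k (w + u) := hkmono w (w + u) (le_add_of_nonneg_right (by positivity))
      have hslt : s w < s (w + u) := hsadd w u hu
      rw [hlt] at hvw ⊢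
      rcases hvw with h | ⟨hke, hrest⟩
      · exact Or.inl (lt_of_lt_of_le h hkle)
      · rcases lt_or_eq_of_le hkle with h' | h'
        · exact Or.inl (hke ▸ h')
        · refine Or.inr ⟨hke.trans h', Or.inl ?_⟩
          rcases hrest with h'' | ⟨h'', _⟩
          · exact h''.trans hslt
          · exact h'' ▸ hslt
    · -- 0 is minimum
      intro v hv
      rw [hlt]
      have hk0 : k 0 ≤ k v := hkmono 0 v (by positivity)
      have hs0 : s 0 < s v := by simpa using hsadd 0 v hv
      rcases lt_or_eq_of_le hk0 with h | h
      · exact Or.inl h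
      · exact Or.inr ⟨h, Or.inl hs0⟩
    · -- F is the maximum gap
      intro x hxS hxF
      have hnle : ¬ F ≤ x := fun hle => hno ⟨x, hxS, hxF, hle⟩
      obtain ⟨i, hi⟩ : ∃ i, x i < F i := by
        by_contra h
        push_neg at h
        exact hnle fun i => h i
      rw [hlt]
      left
      have : k F = ∑ i, F i := by simp [k]
      rw [this]
      exact Finset.sum_lt_sum (fun j _ => min_le_right _ _)
        ⟨i, Finset.mem_univ i, by omega⟩
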